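/- (Per-bit code comparison.) Let Ẽ = (ẽ_{jk}) and F̃ = (f̃_{jk}) be 2×w and 2×v row-stochastic matrices (the equivalent transfer matrices of two codes for the r-th information bit). Suppose that for every x ∈ [0,1], sup{Σⱼ ẽ_{2j} δⱼ : δ ∈ [0,1]ʷ, Σⱼ ẽ_{1j} δⱼ ≤ x} ≥ sup{Σⱼ f̃_{2j} εⱼ : ε ∈ [0,1]ᵛ, Σⱼ f̃_{1j} εⱼ ≤ x}. Then there exists a w×v row-stochastic matrix M with Ẽ M = F̃, and consequently for every row-stochastic v×2 decision matrix R there exists a row-stochastic w×2 decision matrix S such that for each bit value i ∈ {0,1}, the error probability Σ_{k} ẽ_{ik} · S k (1−i)' of decoding bit value i from Ẽ with S is at most the error probability Σ_{k} f̃_{ik} · R k (1−i)' of decoding it from F̃ with R (where (1−i)' denotes the wrong decision). -/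

import Mathlib

open Matrix Finset

/-- A real matrix is row-stochastic if it has nonnegative entries and each row sums to 1. -/
def RowStochastic {n m : ℕ} (A : Matrix (Fin n) (Fin m) ℝ) : Prop :=
  (∀ i j, 0 ≤ A i j) ∧ ∀ i, ∑ j, A i j = 1

/-- The zonotope of a `2 × n` matrix `A`: all combinations `∑ⱼ δⱼ aⱼ` of the columns `aⱼ`
of `A` with coefficients `δⱼ ∈ [0,1]`; equivalently the Minkowski sum of the segments
`conv(0, aⱼ)`. -/
def zonotope {n : ℕ} (A : Matrix (Fin 2) (Fin n) ℝ) : Set (Fin 2 → ℝ) :=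
  {z | ∃ δ : Fin n → ℝ, (∀ j, δ j ∈ Set.Icc (0 : ℝ) 1) ∧
    z = ∑ j : Fin n, δ j • (fun i : Fin 2 => A i j)}


namespace PerBitAux

/-- evaluation of an affine function given as a pair `(intercept, slope)` -/
def aev (p : ℝ × ℝ) (t : ℝ) : ℝ := p.1 + p.2 * t

/-- piecewise-linear function: head affine piece is active on `[r, ∞)` where `r` is the
first breakpoint; the list continues leftwards. -/
noncomputable def pev : ℝ × ℝ → List (ℝ × (ℝ × ℝ)) → ℝ → ℝ
  | B, [], t => aev B t
  | _B, (r, B') :: rest, t => if r ≤ t then aev _B t else pev B' rest t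

/-- sum of hinge terms -/
def hq : ℝ × ℝ → List (ℝ × (ℝ × ℝ)) → ℝ → ℝ
  | _, [], _ => 0
  | B, (_, B') :: rest, t => max 0 (aev B t - aev B' t) + hq B' rest t

/-- leftmost (base) affine piece -/
def baseA : ℝ × ℝ → List (ℝ × (ℝ × ℝ)) → ℝ × ℝ
  | B, [] => B
  | _, (_, B') :: rest => baseA B' rest

/-- validity of a piecewise structure -/
def valid : ℝ × ℝ → List (ℝ × (ℝ × ℝ)) → Prop
  | _, [] => True
  | B, (r, B') :: rest =>
      aev B r = aev B' r ∧ B'.2 ≤ B.2 ∧ (∀ x ∈ rest, x.1 ≤ r) ∧ valid B' rest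

/-- max of a nonempty family of affine functions -/
def maxA : ℝ × ℝ → List (ℝ × ℝ) → ℝ → ℝ
  | p, [], t => aev p t
  | p, q :: L, t => max (aev p t) (maxA q L t)

lemma maxA_le {t : ℝ} : ∀ (L : List (ℝ × ℝ)) (p : ℝ × ℝ), ∀ x ∈ p :: L, aev x t ≤ maxA p L t := by
  intro L
  induction L with
  | nil => intro p x hx; simp at hx; subst hx; simp [maxA]
  | cons q L ih =>
    intro p x hx
    rcases List.mem_cons.1 hx with h | h
    · subst h; simp [maxA]
    · exact le_trans (ih q x h) (le_max_right _ _)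

lemma maxA_mem {t : ℝ} : ∀ (L : List (ℝ × ℝ)) (p : ℝ × ℝ), ∃ x ∈ p :: L, maxA p L t = aev x t := by
  intro L
  induction L with
  | nil => intro p; exact ⟨p, by simp, rfl⟩
  | cons q L ih =>
    intro p
    obtain ⟨x, hx, hex⟩ := ih q
    rcases le_total (aev p t) (maxA q L t) with h | h
    · refine ⟨x, List.mem_cons_of_mem _ hx, ?_⟩
      simp only [maxA]
      rw [max_eq_right h, hex]
    · exact ⟨p, List.mem_cons_self, by simp [maxA, max_eq_left h]⟩

lemma aev_cont (p : ℝ × ℝ) : Continuous (aev p) := by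
  unfold aev; fun_prop

lemma maxA_cont : ∀ (L : List (ℝ × ℝ)) (p : ℝ × ℝ), Continuous (maxA p L) := by
  intro L
  induction L with
  | nil => intro p; simpa [maxA] using aev_cont p
  | cons q L ih =>
    intro p
    have : maxA p (q :: L) = fun t => max (aev p t) (maxA q L t) := rfl
    rw [this]
    exact (aev_cont p).max (ih q)

lemma maxA_lip {c : ℝ} : ∀ (L : List (ℝ × ℝ)) (p : ℝ × ℝ),
    (∀ x ∈ p :: L, x.2 ≤ c) → ∀ s t : ℝ, s ≤ t →
    maxA p L t - maxA p L s ≤ c * (t - s) := by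
  intro L
  induction L with
  | nil =>
    intro p hb s t hst
    have hp := hb p (by simp)
    simp only [maxA, aev]
    have : p.1 + p.2 * t - (p.1 + p.2 * s) = p.2 * (t - s) := by ring
    rw [this]
    exact mul_le_mul_of_nonneg_right hp (by linarith)
  | cons q L ih =>
    intro p hb s t hst
    have h1 : aev p t - aev p s ≤ c * (t - s) := by
      have hp := hb p (by simp)
      simp only [aev]
      have : p.1 + p.2 * t - (p.1 + p.2 * s) = p.2 * (t - s) := by ring
      rw [this]
      exact mul_le_mul_of_nonneg_right hp (by linarith)
    have h2 : maxA q L t - maxA q L s ≤ c * (t - s) :=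
      ih q (fun x hx => hb x (List.mem_cons_of_mem _ hx)) s t hst
    simp only [maxA]
    rcases max_cases (aev p t) (maxA q L t) with ⟨he, _⟩ | ⟨he, _⟩ <;> rw [he]
    · have := le_max_left (aev p s) (maxA q L s); linarith
    · have := le_max_right (aev p s) (maxA q L s); linarith

end PerBitAux

section B
namespace PerBitAux

lemma diff_eq (B B' : ℝ × ℝ) (r t : ℝ) (hglue : aev B r = aev B' r) :
    aev B t - aev B' t = (B.2 - B'.2) * (t - r) := by
  simp only [aev] at *; nlinarith [hglue]

lemma pev_top : ∀ (L : List (ℝ × (ℝ × ℝ))) (B : ℝ × ℝ) (t : ℝ),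
    (∀ x ∈ L, x.1 ≤ t) → pev B L t = aev B t := by
  intro L B t h
  cases L with
  | nil => rfl
  | cons a rest =>
    obtain ⟨r, B'⟩ := a
    simp only [pev, if_pos (h (r, B') (by simp))]

lemma pev_hinge : ∀ (L : List (ℝ × (ℝ × ℝ))) (B : ℝ × ℝ), valid B L →
    ∀ t, pev B L t = aev (baseA B L) t + hq B L t := by
  intro L
  induction L with
  | nil => intro B _ t; simp [pev, baseA, hq]
  | cons a rest ih =>
    obtain ⟨r, B'⟩ := a
    intro B hv t
    obtain ⟨hglue, hslope, hbp, hv'⟩ := hv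
    have hdiff : aev B t - aev B' t = (B.2 - B'.2) * (t - r) := diff_eq B B' r t hglue
    have hbase : baseA B ((r, B') :: rest) = baseA B' rest := rfl
    by_cases htr : r ≤ t
    · have h1 : pev B ((r, B') :: rest) t = aev B t := by simp [pev, if_pos htr]
      have h2 : pev B' rest t = aev B' t := pev_top rest B' t (fun x hx => le_trans (hbp x hx) htr)
      have h3 := ih B' hv' t
      have hd0 : 0 ≤ aev B t - aev B' t := by
        rw [hdiff]; exact mul_nonneg (by linarith) (by linarith)
      rw [h1, hbase]
      simp only [hq, max_eq_right hd0]
      rw [h2, h3] at *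
      linarith [h3]
    · push_neg at htr
      have h1 : pev B ((r, B') :: rest) t = pev B' rest t := by
        simp [pev, if_neg (not_le.2 htr)]
      have hd0 : aev B t - aev B' t ≤ 0 := by
        rw [hdiff]; exact mul_nonpos_of_nonneg_of_nonpos (by linarith) (by linarith)
      rw [h1, hbase, ih B' hv' t]
      simp only [hq, max_eq_left hd0]
      ring

/-- drop the pieces active to the right of `r` -/
noncomputable def cutAt (r : ℝ) : ℝ × ℝ → List (ℝ × (ℝ × ℝ)) → (ℝ × ℝ) × List (ℝ × (ℝ × ℝ))
  | B, [] => (B, [])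
  | B, (s, B') :: rest => if s < r then (B, (s, B') :: rest) else cutAt r B' rest

lemma cut_valid (r : ℝ) : ∀ (L : List (ℝ × (ℝ × ℝ))) (B : ℝ × ℝ), valid B L →
    valid (cutAt r B L).1 (cutAt r B L).2 := by
  intro L
  induction L with
  | nil => intro B h; exact h
  | cons a rest ih =>
    obtain ⟨s, B'⟩ := a
    intro B hv
    by_cases hs : s < r
    · simpa [cutAt, if_pos hs] using hv
    · simpa [cutAt, if_neg hs] using ih B' hv.2.2.2

lemma cut_bp (r : ℝ) : ∀ (L : List (ℝ × (ℝ × ℝ))) (B : ℝ × ℝ), valid B L →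
    ∀ x ∈ (cutAt r B L).2, x.1 < r := by
  intro L
  induction L with
  | nil => intro B _ x hx; simp [cutAt] at hx
  | cons a rest ih =>
    obtain ⟨s, B'⟩ := a
    intro B hv x hx
    by_cases hs : s < r
    · simp only [cutAt, if_pos hs] at hx
      rcases List.mem_cons.1 hx with h | h
      · subst h; exact hs
      · exact lt_of_le_of_lt (hv.2.2.1 x h) hs
    · simp only [cutAt, if_neg hs] at hx
      exact ih B' hv.2.2.2 x hx

lemma cut_slope (r : ℝ) : ∀ (L : List (ℝ × (ℝ × ℝ))) (B : ℝ × ℝ), valid B L →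
    (cutAt r B L).1.2 ≤ B.2 := by
  intro L
  induction L with
  | nil => intro B _; exact le_refl _
  | cons a rest ih =>
    obtain ⟨s, B'⟩ := a
    intro B hv
    by_cases hs : s < r
    · simp [cutAt, if_pos hs]
    · simp only [cutAt, if_neg hs]
      exact le_trans (ih B' hv.2.2.2) hv.2.1

lemma cut_pev (r : ℝ) : ∀ (L : List (ℝ × (ℝ × ℝ))) (B : ℝ × ℝ), valid B L →
    ∀ t ≤ r, pev (cutAt r B L).1 (cutAt r B L).2 t = pev B L t := by
  intro L
  induction L with
  | nil => intro B _ t _; rfl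
  | cons a rest ih =>
    obtain ⟨s, B'⟩ := a
    intro B hv t htr
    obtain ⟨hglue, hslope, hbp, hv'⟩ := hv
    by_cases hs : s < r
    · simp [cutAt, if_pos hs]
    · simp only [cutAt, if_neg hs]
      push_neg at hs
      rw [ih B' hv' t htr]
      by_cases hst : s ≤ t
      · have hts : t = s := le_antisymm (le_trans htr hs) hst
        have h2 : pev B' rest t = aev B' t := pev_top rest B' t (fun x hx => by
          rw [hts]; exact hbp x hx)
        simp only [pev, if_pos hst, h2]
        rw [hts, hglue]
      · simp [pev, if_neg hst]

end PerBitAux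
end B

section C
namespace PerBitAux

lemma struct : ∀ (L : List (ℝ × ℝ)) (p : ℝ × ℝ),
    List.Pairwise (fun a b : ℝ × ℝ => b.2 ≤ a.2) (p :: L) →
    ∃ B M, valid B M ∧ B.2 ≤ p.2 ∧ ∀ t, pev B M t = maxA p L t := by
  intro L
  induction L with
  | nil =>
    intro p _
    exact ⟨p, [], trivial, le_refl _, fun t => rfl⟩
  | cons q L ih =>
    intro p hs
    have hpq : ∀ b ∈ q :: L, b.2 ≤ p.2 := by
      intro b hb; exact (List.pairwise_cons.1 hs).1 b hb
    have hs' : List.Pairwise (fun a b : ℝ × ℝ => b.2 ≤ a.2) (q :: L) := (List.pairwise_cons.1 hs).2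
    obtain ⟨B', M', hv', hsl', hpev'⟩ := ih q hs'
    by_cases h1 : ∀ t, maxA q L t ≤ aev p t
    · refine ⟨p, [], trivial, le_refl _, fun t => ?_⟩
      simp only [pev, maxA]
      exact (max_eq_left (h1 t)).symm
    · by_cases h2 : ∀ t, aev p t ≤ maxA q L t
      · refine ⟨B', M', hv', le_trans hsl' (hpq q (by simp)), fun t => ?_⟩
        simp only [maxA]
        rw [hpev' t, max_eq_right (h2 t)]
      · push_neg at h1 h2
        obtain ⟨t0, ht0⟩ := h1
        obtain ⟨t1, ht1⟩ := h2
        set D : ℝ → ℝ := fun t => aev p t - maxA q L t with hD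
        have hmono : ∀ s t : ℝ, s ≤ t → D s ≤ D t := by
          intro s t hst
          have hlip := maxA_lip (c := p.2) L q (fun x hx => hpq x hx) s t hst
          have : aev p t - aev p s = p.2 * (t - s) := by simp only [aev]; ring
          simp only [hD]
          linarith
        have hDcont : Continuous D := (aev_cont p).sub (maxA_cont L q)
        set Sset : Set ℝ := {t | 0 ≤ D t} with hSset
        have hne : Sset.Nonempty := ⟨t1, by simp only [hSset, Set.mem_setOf_eq, hD]; linarith⟩
        have hbdd : BddBelow Sset := by
          refine ⟨t0, fun x hx => ?_⟩
          by_contra hc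
          push_neg at hc
          have h6 := hmono x t0 (le_of_lt hc)
          simp only [hSset, Set.mem_setOf_eq] at hx
          have : D t0 < 0 := by simp only [hD]; linarith
          linarith
        have hclosed : IsClosed Sset := isClosed_le continuous_const hDcont
        set r := sInf Sset with hr
        have hrmem : r ∈ Sset := hclosed.csInf_mem hne hbdd
        have hDr0 : D r = 0 := by
          refine le_antisymm ?_ hrmem
          by_contra hc
          push_neg at hc
          have hopen : IsOpen {t | 0 < D t} := isOpen_lt continuous_const hDcont
          obtain ⟨ε, hε, hball⟩ := Metric.isOpen_iff.1 hopen r hc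
          have hmem2 : r - ε / 2 ∈ Sset := by
            have hd : dist (r - ε / 2) r = ε / 2 := by
              rw [Real.dist_eq, show r - ε / 2 - r = -(ε / 2) by ring, abs_neg,
                abs_of_nonneg (by linarith)]
            have hb : r - ε / 2 ∈ Metric.ball r ε := by
              rw [Metric.mem_ball, hd]; linarith
            show (0:ℝ) ≤ D (r - ε / 2)
            exact le_of_lt (hball hb)
          have := csInf_le hbdd hmem2
          linarith
        have hcv := cut_valid r M' B' hv'
        have hcb := cut_bp r M' B' hv'
        have hcs := cut_slope r M' B' hv'
        have hcp := cut_pev r M' B' hv'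
        refine ⟨p, (r, (cutAt r B' M').1) :: (cutAt r B' M').2, ?_, le_refl _, ?_⟩
        · refine ⟨?_, le_trans hcs (le_trans hsl' (hpq q (by simp))),
            fun x hx => le_of_lt (hcb x hx), hcv⟩
          have h2 : pev (cutAt r B' M').1 (cutAt r B' M').2 r = pev B' M' r := hcp r (le_refl r)
          have h3 : pev (cutAt r B' M').1 (cutAt r B' M').2 r = aev (cutAt r B' M').1 r :=
            pev_top _ _ r (fun x hx => le_of_lt (hcb x hx))
          have h4 : pev B' M' r = maxA q L r := hpev' r
          have h5 : aev p r = maxA q L r := by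
            simp only [hD] at hDr0; linarith
          rw [← h3, h2, h4, ← h5]
        · intro t
          by_cases htr : r ≤ t
          · have hle : maxA q L t ≤ aev p t := by
              have := hmono r t htr
              simp only [hD] at this hDr0
              linarith
            simp only [pev, maxA, if_pos htr]
            exact (max_eq_left hle).symm
          · push_neg at htr
            have hDt : D t ≤ 0 := by rw [← hDr0]; exact hmono t r (le_of_lt htr)
            have hle : aev p t ≤ maxA q L t := by
              simp only [hD] at hDt; linarith
            simp only [pev, maxA, if_neg (not_le.2 htr)]
            rw [hcp t (le_of_lt htr), hpev' t, max_eq_right hle]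

end PerBitAux
end C

section D
namespace PerBitAux

lemma scale_aev (A : ℝ × ℝ) (x y : ℝ) (hx : 0 ≤ x) (hy : 0 ≤ y) :
    (x + y) * aev A (y / (x + y)) = A.1 * x + (A.1 + A.2) * y := by
  by_cases hxy : x + y = 0
  · have hx0 : x = 0 := by linarith
    have hy0 : y = 0 := by linarith
    simp [hx0, hy0]
  · simp only [aev]
    field_simp
    ring

lemma scale_hinge (B B' : ℝ × ℝ) (x y : ℝ) (hx : 0 ≤ x) (hy : 0 ≤ y) :
    (x + y) * max 0 (aev B (y / (x + y)) - aev B' (y / (x + y))) =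
      max 0 ((B.1 - B'.1) * x + ((B.1 - B'.1) + (B.2 - B'.2)) * y) := by
  have hσ : 0 ≤ x + y := by linarith
  rw [mul_max_of_nonneg _ _ hσ, mul_zero, mul_sub, scale_aev B x y hx hy,
    scale_aev B' x y hx hy]
  congr 1
  ring

lemma hinge_comp {w v : ℕ} (a b : Fin w → ℝ) (c d : Fin v → ℝ)
    (ha : ∀ j, 0 ≤ a j) (hb : ∀ j, 0 ≤ b j) (hc : ∀ k, 0 ≤ c k) (hd : ∀ k, 0 ≤ d k)
    (hyp : ∀ ν : ℝ × ℝ, (∑ k, max 0 (ν.1 * c k + ν.2 * d k)) ≤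
      ∑ j, max 0 (ν.1 * a j + ν.2 * b j)) :
    ∀ (L : List (ℝ × (ℝ × ℝ))) (B : ℝ × ℝ), valid B L →
    (∑ k, (c k + d k) * hq B L (d k / (c k + d k))) ≤
      ∑ j, (a j + b j) * hq B L (b j / (a j + b j)) := by
  intro L
  induction L with
  | nil => intro B _; simp [hq]
  | cons e rest ih =>
    obtain ⟨r, B'⟩ := e
    intro B hv
    have ih' := ih B' hv.2.2.2
    have hterm : ∀ k : Fin v, (c k + d k) * hq B ((r, B') :: rest) (d k / (c k + d k)) =
        max 0 ((B.1 - B'.1) * c k + ((B.1 - B'.1) + (B.2 - B'.2)) * d k) +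
          (c k + d k) * hq B' rest (d k / (c k + d k)) := by
      intro k
      simp only [hq, mul_add]
      rw [scale_hinge B B' (c k) (d k) (hc k) (hd k)]
    have hterm2 : ∀ j : Fin w, (a j + b j) * hq B ((r, B') :: rest) (b j / (a j + b j)) =
        max 0 ((B.1 - B'.1) * a j + ((B.1 - B'.1) + (B.2 - B'.2)) * b j) +
          (a j + b j) * hq B' rest (b j / (a j + b j)) := by
      intro j
      simp only [hq, mul_add]
      rw [scale_hinge B B' (a j) (b j) (ha j) (hb j)]
    simp only [hterm, hterm2, Finset.sum_add_distrib]
    exact add_le_add (hyp ((B.1 - B'.1), (B.1 - B'.1) + (B.2 - B'.2))) ih'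

end PerBitAux
end D

section E
namespace PerBitAux

lemma max_zero_eq (z : ℝ) : max 0 z = z + max 0 (-z) := by
  rcases le_total 0 z with h | h
  · rw [max_eq_right h, max_eq_left (by linarith)]; ring
  · rw [max_eq_left h, max_eq_right (by linarith)]; ring

lemma psi {w v : ℕ} (E : Matrix (Fin 2) (Fin w) ℝ) (F : Matrix (Fin 2) (Fin v) ℝ)
    (hEnn : ∀ i j, 0 ≤ E i j) (hFnn : ∀ i j, 0 ≤ F i j)
    (hE0 : ∑ j, E 0 j = 1) (hE1 : ∑ j, E 1 j = 1)
    (hF0 : ∑ j, F 0 j = 1) (hF1 : ∑ j, F 1 j = 1)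
    (hdom : ∀ x ∈ Set.Icc (0 : ℝ) 1,
      sSup {s : ℝ | ∃ ε : Fin v → ℝ, (∀ j, ε j ∈ Set.Icc (0 : ℝ) 1) ∧
          (∑ j : Fin v, F 0 j * ε j) ≤ x ∧ s = ∑ j : Fin v, F 1 j * ε j} ≤
        sSup {s : ℝ | ∃ δ : Fin w → ℝ, (∀ j, δ j ∈ Set.Icc (0 : ℝ) 1) ∧
          (∑ j : Fin w, E 0 j * δ j) ≤ x ∧ s = ∑ j : Fin w, E 1 j * δ j}) :
    ∀ ν : ℝ × ℝ, (∑ k, max 0 (ν.1 * F 0 k + ν.2 * F 1 k)) ≤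
      ∑ j, max 0 (ν.1 * E 0 j + ν.2 * E 1 j) := by
  -- the main case : ν.2 > 0
  have main : ∀ ν : ℝ × ℝ, 0 < ν.2 →
      (∑ k, max 0 (ν.1 * F 0 k + ν.2 * F 1 k)) ≤
        ∑ j, max 0 (ν.1 * E 0 j + ν.2 * E 1 j) := by
    intro ν hν2
    rcases le_or_gt 0 ν.1 with hν1 | hν1
    · -- all terms nonnegative on both sides; both sums are ν.1 + ν.2
      have hFk : ∀ k, 0 ≤ ν.1 * F 0 k + ν.2 * F 1 k := fun k =>
        add_nonneg (mul_nonneg hν1 (hFnn 0 k)) (mul_nonneg (le_of_lt hν2) (hFnn 1 k))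
      have hEj : ∀ j, 0 ≤ ν.1 * E 0 j + ν.2 * E 1 j := fun j =>
        add_nonneg (mul_nonneg hν1 (hEnn 0 j)) (mul_nonneg (le_of_lt hν2) (hEnn 1 j))
      have e1 : (∑ k, max 0 (ν.1 * F 0 k + ν.2 * F 1 k)) = ν.1 + ν.2 := by
        rw [Finset.sum_congr rfl (fun k _ => max_eq_right (hFk k)),
          Finset.sum_add_distrib, ← Finset.mul_sum, ← Finset.mul_sum, hF0, hF1]
        ring
      have e2 : (∑ j, max 0 (ν.1 * E 0 j + ν.2 * E 1 j)) = ν.1 + ν.2 := by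
        rw [Finset.sum_congr rfl (fun j _ => max_eq_right (hEj j)),
          Finset.sum_add_distrib, ← Finset.mul_sum, ← Finset.mul_sum, hE0, hE1]
        ring
      rw [e1, e2]
    · -- ν.1 < 0 : use hdom at x*
      set εs : Fin v → ℝ := fun k => if 0 ≤ ν.1 * F 0 k + ν.2 * F 1 k then 1 else 0 with hεs
      have hεIcc : ∀ k, εs k ∈ Set.Icc (0:ℝ) 1 := by
        intro k; simp only [hεs]; split <;> simp
      set xs : ℝ := ∑ k, F 0 k * εs k with hxs
      set yF : ℝ := ∑ k, F 1 k * εs k with hyF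
      have hx0 : 0 ≤ xs := Finset.sum_nonneg fun k _ =>
        mul_nonneg (hFnn 0 k) (hεIcc k).1
      have hx1 : xs ≤ 1 := by
        rw [hxs, ← hF0]
        exact Finset.sum_le_sum fun k _ => by
          nlinarith [(hεIcc k).2, hFnn 0 k, (hεIcc k).1]
      have hGF : (∑ k, max 0 (ν.1 * F 0 k + ν.2 * F 1 k)) = ν.1 * xs + ν.2 * yF := by
        rw [hxs, hyF, Finset.mul_sum, Finset.mul_sum, ← Finset.sum_add_distrib]
        refine Finset.sum_congr rfl fun k _ => ?_
        by_cases h : 0 ≤ ν.1 * F 0 k + ν.2 * F 1 k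
        · rw [max_eq_right h]; simp only [hεs, if_pos h]; ring
        · rw [max_eq_left (le_of_lt (not_le.1 h))]; simp only [hεs, if_neg h]; ring
      set GE : ℝ := ∑ j, max 0 (ν.1 * E 0 j + ν.2 * E 1 j) with hGE
      set SF : Set ℝ := {s : ℝ | ∃ ε : Fin v → ℝ, (∀ j, ε j ∈ Set.Icc (0 : ℝ) 1) ∧
          (∑ j : Fin v, F 0 j * ε j) ≤ xs ∧ s = ∑ j : Fin v, F 1 j * ε j} with hSF
      set SE : Set ℝ := {s : ℝ | ∃ δ : Fin w → ℝ, (∀ j, δ j ∈ Set.Icc (0 : ℝ) 1) ∧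
          (∑ j : Fin w, E 0 j * δ j) ≤ xs ∧ s = ∑ j : Fin w, E 1 j * δ j} with hSE
      have hyFmem : yF ∈ SF := ⟨εs, hεIcc, le_of_eq hxs.symm, hyF⟩
      have hSFbdd : BddAbove SF := by
        refine ⟨1, fun s hs => ?_⟩
        obtain ⟨ε, hι, _, rfl⟩ := hs
        rw [← hF1]
        exact Finset.sum_le_sum fun k _ => by
          nlinarith [(hι k).2, hFnn 1 k, (hι k).1]
      have h1 : yF ≤ sSup SF := le_csSup hSFbdd hyFmem
      have h2 : sSup SF ≤ sSup SE := hdom xs ⟨hx0, hx1⟩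
      have h3 : sSup SE ≤ (GE - ν.1 * xs) / ν.2 := by
        refine csSup_le ⟨0, fun _ => 0, by simp, by simpa using hx0, by simp⟩ ?_
        rintro s ⟨δ, hδ, hδx, rfl⟩
        rw [le_div_iff₀ hν2]
        have key : ν.1 * (∑ j, E 0 j * δ j) + ν.2 * (∑ j, E 1 j * δ j) ≤ GE := by
          rw [hGE, Finset.mul_sum, Finset.mul_sum, ← Finset.sum_add_distrib]
          refine Finset.sum_le_sum fun j _ => ?_
          have hz : ν.1 * (E 0 j * δ j) + ν.2 * (E 1 j * δ j) =
              (ν.1 * E 0 j + ν.2 * E 1 j) * δ j := by ring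
          rw [hz]
          rcases le_or_gt 0 (ν.1 * E 0 j + ν.2 * E 1 j) with h | h
          · calc (ν.1 * E 0 j + ν.2 * E 1 j) * δ j ≤ (ν.1 * E 0 j + ν.2 * E 1 j) * 1 :=
                  mul_le_mul_of_nonneg_left (hδ j).2 h
              _ ≤ max 0 (ν.1 * E 0 j + ν.2 * E 1 j) := by rw [mul_one]; exact le_max_right _ _
          · calc (ν.1 * E 0 j + ν.2 * E 1 j) * δ j ≤ 0 :=
                  mul_nonpos_of_nonpos_of_nonneg (le_of_lt h) (hδ j).1
              _ ≤ max 0 (ν.1 * E 0 j + ν.2 * E 1 j) := le_max_left _ _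
        have hxle : ν.1 * xs ≤ ν.1 * (∑ j, E 0 j * δ j) := by
          have := mul_le_mul_of_nonpos_left hδx (le_of_lt hν1)
          linarith
        linarith
      have hfin := (le_div_iff₀ hν2).1 (le_trans (le_trans h1 h2) h3)
      rw [hGF]
      linarith
  -- general ν by symmetry
  have symF : ∀ ν : ℝ × ℝ, (∑ k, max 0 (ν.1 * F 0 k + ν.2 * F 1 k)) =
      (ν.1 + ν.2) + ∑ k, max 0 ((-ν.1) * F 0 k + (-ν.2) * F 1 k) := by
    intro ν
    have : ∀ k : Fin v, max 0 (ν.1 * F 0 k + ν.2 * F 1 k) =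
        (ν.1 * F 0 k + ν.2 * F 1 k) + max 0 ((-ν.1) * F 0 k + (-ν.2) * F 1 k) := by
      intro k
      rw [max_zero_eq (ν.1 * F 0 k + ν.2 * F 1 k)]
      ring_nf
    rw [Finset.sum_congr rfl (fun k _ => this k), Finset.sum_add_distrib,
      Finset.sum_add_distrib, ← Finset.mul_sum, ← Finset.mul_sum, hF0, hF1]
    ring
  have symE : ∀ ν : ℝ × ℝ, (∑ j, max 0 (ν.1 * E 0 j + ν.2 * E 1 j)) =
      (ν.1 + ν.2) + ∑ j, max 0 ((-ν.1) * E 0 j + (-ν.2) * E 1 j) := by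
    intro ν
    have : ∀ j : Fin w, max 0 (ν.1 * E 0 j + ν.2 * E 1 j) =
        (ν.1 * E 0 j + ν.2 * E 1 j) + max 0 ((-ν.1) * E 0 j + (-ν.2) * E 1 j) := by
      intro j
      rw [max_zero_eq (ν.1 * E 0 j + ν.2 * E 1 j)]
      ring_nf
    rw [Finset.sum_congr rfl (fun j _ => this j), Finset.sum_add_distrib,
      Finset.sum_add_distrib, ← Finset.mul_sum, ← Finset.mul_sum, hE0, hE1]
    ring
  intro ν
  rcases lt_trichotomy 0 ν.2 with h | h | h
  · exact main ν h
  · -- ν.2 = 0 : both sides equal max 0 ν.1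
    have e1 : (∑ k, max 0 (ν.1 * F 0 k + ν.2 * F 1 k)) = max 0 ν.1 := by
      have h9 : ∀ k : Fin v, max 0 (ν.1 * F 0 k + ν.2 * F 1 k) = max 0 ν.1 * F 0 k := by
        intro k
        rw [← h, zero_mul, add_zero, max_mul_of_nonneg _ _ (hFnn 0 k), zero_mul]
      rw [Finset.sum_congr rfl (fun k _ => h9 k), ← Finset.mul_sum, hF0, mul_one]
    have e2 : (∑ j, max 0 (ν.1 * E 0 j + ν.2 * E 1 j)) = max 0 ν.1 := by
      have h9 : ∀ j : Fin w, max 0 (ν.1 * E 0 j + ν.2 * E 1 j) = max 0 ν.1 * E 0 j := by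
        intro j
        rw [← h, zero_mul, add_zero, max_mul_of_nonneg _ _ (hEnn 0 j), zero_mul]
      rw [Finset.sum_congr rfl (fun j _ => h9 j), ← Finset.mul_sum, hE0, mul_one]
    rw [e1, e2]
  · -- ν.2 < 0 : apply the symmetric identity
    have hmain := main (-ν.1, -ν.2) (by simpa using h)
    rw [symF ν, symE ν]
    simpa using add_le_add_left hmain (ν.1 + ν.2)

end PerBitAux
end E

section F
namespace PerBitAux

lemma exists_M {w v : ℕ} (E : Matrix (Fin 2) (Fin w) ℝ) (F : Matrix (Fin 2) (Fin v) ℝ)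
    (hEnn : ∀ i j, 0 ≤ E i j) (hFnn : ∀ i j, 0 ≤ F i j)
    (hE0 : ∑ j, E 0 j = 1) (hE1 : ∑ j, E 1 j = 1)
    (hF0 : ∑ j, F 0 j = 1) (hF1 : ∑ j, F 1 j = 1)
    (hpsi : ∀ ν : ℝ × ℝ, (∑ k, max 0 (ν.1 * F 0 k + ν.2 * F 1 k)) ≤
      ∑ j, max 0 (ν.1 * E 0 j + ν.2 * E 1 j)) :
    ∃ M : Fin w → Fin v → ℝ, (∀ j k, 0 ≤ M j k) ∧ (∀ j, ∑ k, M j k = 1) ∧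
      ∀ i k, ∑ j, E i j * M j k = F i k := by
  have hv : v ≠ 0 := by
    intro h
    subst h
    simp at hF0
  haveI : Nonempty (Fin v) := ⟨⟨0, Nat.pos_of_ne_zero hv⟩⟩
  set S : Set (Fin w → Fin v → ℝ) :=
    {M | (∀ j k, 0 ≤ M j k ∧ M j k ≤ 1) ∧ ∀ j, ∑ k, M j k = 1} with hSdef
  set Φ : (Fin w → Fin v → ℝ) → (Fin 2 → Fin v → ℝ) :=
    (fun M => fun i k => ∑ j, E i j * M j k) with hΦdef
  set Fv : Fin 2 → Fin v → ℝ := fun i k => F i k with hFv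
  suffices hFK : Fv ∈ Φ '' S by
    obtain ⟨M, hMS, hΦM⟩ := hFK
    exact ⟨M, fun j k => (hMS.1 j k).1, hMS.2,
      fun i k => by have := congrFun (congrFun hΦM i) k; exact this⟩
  by_contra hFK
  -- compactness of S
  have hT : IsCompact (Set.pi Set.univ
      (fun _ : Fin w => Set.pi Set.univ fun _ : Fin v => Set.Icc (0:ℝ) 1)) :=
    isCompact_univ_pi fun _ => isCompact_univ_pi fun _ => isCompact_Icc
  have hSeq : S = (Set.pi Set.univ
      (fun _ : Fin w => Set.pi Set.univ fun _ : Fin v => Set.Icc (0:ℝ) 1)) ∩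
      {M | ∀ j, ∑ k, M j k = 1} := by
    ext M
    simp only [hSdef, Set.mem_setOf_eq, Set.mem_inter_iff, Set.mem_pi, Set.mem_univ,
      forall_true_left, Set.mem_Icc, true_implies]
    try tauto
  have hclosed2 : IsClosed {M : Fin w → Fin v → ℝ | ∀ j, ∑ k, M j k = 1} := by
    have : {M : Fin w → Fin v → ℝ | ∀ j, ∑ k, M j k = 1} =
        ⋂ j, {M : Fin w → Fin v → ℝ | ∑ k, M j k = 1} := by
      ext M; simp
    rw [this]
    exact isClosed_iInter fun j => isClosed_eq
      (continuous_finset_sum _ fun k _ => (continuous_apply k).comp (continuous_apply j))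
      continuous_const
  have hScompact : IsCompact S := by
    rw [hSeq]; exact hT.inter_right hclosed2
  have hΦcont : Continuous Φ :=
    continuous_pi fun i => continuous_pi fun k => continuous_finset_sum _ fun j _ =>
      continuous_const.mul ((continuous_apply k).comp (continuous_apply j))
  have hK : IsCompact (Φ '' S) := hScompact.image hΦcont
  have hKconv : Convex ℝ (Φ '' S) := by
    rintro x ⟨M1, hM1, rfl⟩ y ⟨M2, hM2, rfl⟩ a b ha hb hab
    refine ⟨a • M1 + b • M2, ⟨fun j k => ?_, fun j => ?_⟩, ?_⟩
    · simp only [Pi.add_apply, Pi.smul_apply, smul_eq_mul]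
      constructor
      · have := (hM1.1 j k).1; have := (hM2.1 j k).1; positivity
      · nlinarith [(hM1.1 j k).2, (hM2.1 j k).2, (hM1.1 j k).1, (hM2.1 j k).1]
    · simp only [Pi.add_apply, Pi.smul_apply, smul_eq_mul]
      rw [Finset.sum_add_distrib, ← Finset.mul_sum, ← Finset.mul_sum, hM1.2 j, hM2.2 j]
      simpa using hab
    · funext i k
      simp only [hΦdef, Pi.add_apply, Pi.smul_apply, smul_eq_mul]
      rw [Finset.mul_sum, Finset.mul_sum, ← Finset.sum_add_distrib]
      exact Finset.sum_congr rfl fun j _ => by ring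
  obtain ⟨f, u, hfa, hfx⟩ := geometric_hahn_banach_closed_point hKconv hK.isClosed hFK
  -- coefficients of the separating functional
  set dd : Fin 2 → Fin v → (Fin 2 → Fin v → ℝ) :=
    (fun i k => fun i' k' => if i' = i ∧ k' = k then 1 else 0) with hdd
  set lam : Fin 2 → Fin v → ℝ := fun i k => f (dd i k) with hlam
  have hfeval : ∀ x : Fin 2 → Fin v → ℝ, f x = ∑ i, ∑ k, x i k * lam i k := by
    intro x
    have hxrep : x = ∑ i : Fin 2, ∑ k : Fin v, x i k • dd i k := by
      funext i' k'
      simp only [Finset.sum_apply, Pi.smul_apply, smul_eq_mul, hdd, mul_ite, mul_one, mul_zero,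
        ite_and]
      rw [Finset.sum_comm, Finset.sum_eq_single k' (fun b _ hb => by
        apply Finset.sum_eq_zero; intro i _; simp [Ne.symm hb]) (by simp)]
      rw [Finset.sum_eq_single i' (fun b _ hb => by simp [Ne.symm hb]) (by simp)]
      simp
    conv_lhs => rw [hxrep]
    rw [_root_.map_sum]
    refine Finset.sum_congr rfl fun i _ => ?_
    rw [_root_.map_sum]
    exact Finset.sum_congr rfl fun k _ => by rw [_root_.map_smul, smul_eq_mul, hlam]
  -- greedy decoder M*
  have hNach : ∀ j : Fin w, ∃ k0 : Fin v, ∀ k : Fin v,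
      lam 0 k * E 0 j + lam 1 k * E 1 j ≤ lam 0 k0 * E 0 j + lam 1 k0 * E 1 j := by
    intro j
    obtain ⟨k0, _, hk0⟩ := Finset.exists_max_image Finset.univ
      (fun k => lam 0 k * E 0 j + lam 1 k * E 1 j) ⟨Classical.arbitrary (Fin v), Finset.mem_univ _⟩
    exact ⟨k0, fun k => hk0 k (Finset.mem_univ k)⟩
  choose cc hcc using hNach
  set Mstar : Fin w → Fin v → ℝ := fun j k => if k = cc j then 1 else 0 with hMstar
  have hMstarS : Mstar ∈ S := by
    refine ⟨fun j k => ?_, fun j => ?_⟩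
    · simp only [hMstar]; split <;> norm_num
    · simp [hMstar]
  have hfM : f (Φ Mstar) = ∑ j, (lam 0 (cc j) * E 0 j + lam 1 (cc j) * E 1 j) := by
    rw [hfeval (Φ Mstar)]
    have hΦM : ∀ i k, Φ Mstar i k = ∑ j, E i j * Mstar j k := fun i k => rfl
    have step : ∀ i : Fin 2, ∑ k, Φ Mstar i k * lam i k = ∑ j, E i j * lam i (cc j) := by
      intro i
      simp only [hΦM, Finset.sum_mul]
      rw [Finset.sum_comm]
      refine Finset.sum_congr rfl fun j _ => ?_
      simp only [hMstar, mul_ite, ite_mul, mul_one, mul_zero, zero_mul]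
      rw [Finset.sum_ite_eq' Finset.univ (cc j) (fun k => E i j * lam i k)]
      simp
    rw [Fin.sum_univ_two, step 0, step 1, ← Finset.sum_add_distrib]
    exact Finset.sum_congr rfl fun j _ => by ring
  have hfF : f Fv = ∑ k, (F 0 k * lam 0 k + F 1 k * lam 1 k) := by
    rw [hfeval Fv, Fin.sum_univ_two, ← Finset.sum_add_distrib]
  -- the piecewise-linear machinery
  set g : Fin v → ℝ × ℝ := fun k => (lam 0 k, lam 1 k - lam 0 k) with hg
  set L0 : List (ℝ × ℝ) := (List.finRange v).map g with hL0
  haveI htot : IsTotal (ℝ × ℝ) (fun p q : ℝ × ℝ => q.2 ≤ p.2) := ⟨fun a b => le_total b.2 a.2⟩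
  haveI htrans : IsTrans (ℝ × ℝ) (fun p q : ℝ × ℝ => q.2 ≤ p.2) :=
    ⟨fun _ _ _ h1 h2 => le_trans h2 h1⟩
  haveI hdec : DecidableRel (fun p q : ℝ × ℝ => q.2 ≤ p.2) :=
    fun p q => inferInstanceAs (Decidable (q.2 ≤ p.2))
  set Ls := List.insertionSort (fun p q : ℝ × ℝ => q.2 ≤ p.2) L0 with hLsdef
  have hsorted : List.Pairwise (fun p q : ℝ × ℝ => q.2 ≤ p.2) Ls :=
    List.pairwise_insertionSort _ L0
  have hperm : List.Perm Ls L0 := List.perm_insertionSort _ L0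
  have hlen : Ls.length = v := by
    rw [hperm.length_eq, hL0, List.length_map, List.length_finRange]
  have hLsne : Ls ≠ [] := by
    intro h
    rw [h] at hlen
    simp at hlen
    exact hv hlen.symm
  obtain ⟨p, Ltl, hcons⟩ := List.exists_cons_of_ne_nil hLsne
  rw [hcons] at hsorted hperm
  obtain ⟨B, Mst, hvB, _, hpevB⟩ := struct Ltl p hsorted
  -- the bridge between `sup'` and the piecewise structure
  have hbr : ∀ x y : ℝ, 0 ≤ x → 0 ≤ y →
      (Finset.univ.sup' Finset.univ_nonempty (fun k : Fin v => lam 0 k * x + lam 1 k * y)) =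
        (x + y) * pev B Mst (y / (x + y)) := by
    intro x y hx hy
    have haevg : ∀ k, (x + y) * aev (g k) (y / (x + y)) = lam 0 k * x + lam 1 k * y := by
      intro k
      rw [scale_aev (g k) x y hx hy]
      simp only [hg]
      ring
    by_cases hxy : x + y = 0
    · have hx0 : x = 0 := by linarith
      have hy0 : y = 0 := by linarith
      have hz : (fun k : Fin v => lam 0 k * x + lam 1 k * y) = fun _ => (0:ℝ) := by
        funext k; rw [hx0, hy0]; ring
      rw [hz, hxy, zero_mul]
      exact Finset.sup'_const _ _
    · have hσ : 0 < x + y := lt_of_le_of_ne (by linarith) (Ne.symm hxy)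
      apply le_antisymm
      · refine Finset.sup'_le _ _ fun k _ => ?_
        rw [← haevg k, hpevB]
        have hmem : g k ∈ p :: Ltl := hperm.mem_iff.2 (List.mem_map.2 ⟨k, List.mem_finRange k, rfl⟩)
        exact mul_le_mul_of_nonneg_left (maxA_le Ltl p (g k) hmem) (le_of_lt hσ)
      · obtain ⟨x0, hx0mem, hx0eq⟩ := maxA_mem (t := y / (x + y)) Ltl p
        rw [hpevB, hx0eq]
        have hx0L0 : x0 ∈ L0 := hperm.mem_iff.1 hx0mem
        obtain ⟨k0, _, hk0⟩ := List.mem_map.1 hx0L0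
        rw [← hk0, haevg k0]
        exact Finset.le_sup' (fun k : Fin v => lam 0 k * x + lam 1 k * y) (Finset.mem_univ k0)
  have hsupF : ∀ k : Fin v, F 0 k * lam 0 k + F 1 k * lam 1 k ≤
      (F 0 k + F 1 k) * pev B Mst (F 1 k / (F 0 k + F 1 k)) := by
    intro k
    rw [← hbr (F 0 k) (F 1 k) (hFnn 0 k) (hFnn 1 k)]
    have h9 := Finset.le_sup' (fun k' : Fin v => lam 0 k' * F 0 k + lam 1 k' * F 1 k)
      (Finset.mem_univ k)
    have e9 : F 0 k * lam 0 k + F 1 k * lam 1 k = lam 0 k * F 0 k + lam 1 k * F 1 k := by ring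
    rw [e9]
    exact h9
  have hsupE : ∀ j : Fin w, (E 0 j + E 1 j) * pev B Mst (E 1 j / (E 0 j + E 1 j)) =
      lam 0 (cc j) * E 0 j + lam 1 (cc j) * E 1 j := by
    intro j
    rw [← hbr (E 0 j) (E 1 j) (hEnn 0 j) (hEnn 1 j)]
    apply le_antisymm
    · exact Finset.sup'_le _ _ fun k _ => hcc j k
    · exact Finset.le_sup' (fun k : Fin v => lam 0 k * E 0 j + lam 1 k * E 1 j) (Finset.mem_univ (cc j))
  have hdecF : ∑ k, (F 0 k + F 1 k) * pev B Mst (F 1 k / (F 0 k + F 1 k)) =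
      ((baseA B Mst).1 + ((baseA B Mst).1 + (baseA B Mst).2)) +
        ∑ k, (F 0 k + F 1 k) * hq B Mst (F 1 k / (F 0 k + F 1 k)) := by
    have h9 : ∀ k : Fin v, (F 0 k + F 1 k) * pev B Mst (F 1 k / (F 0 k + F 1 k)) =
        ((baseA B Mst).1 * F 0 k + ((baseA B Mst).1 + (baseA B Mst).2) * F 1 k) +
          (F 0 k + F 1 k) * hq B Mst (F 1 k / (F 0 k + F 1 k)) := by
      intro k
      rw [pev_hinge Mst B hvB, mul_add, scale_aev _ _ _ (hFnn 0 k) (hFnn 1 k)]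
    rw [Finset.sum_congr rfl fun k _ => h9 k, Finset.sum_add_distrib,
      Finset.sum_add_distrib, ← Finset.mul_sum, ← Finset.mul_sum, hF0, hF1]
    ring
  have hdecE : ∑ j, (E 0 j + E 1 j) * pev B Mst (E 1 j / (E 0 j + E 1 j)) =
      ((baseA B Mst).1 + ((baseA B Mst).1 + (baseA B Mst).2)) +
        ∑ j, (E 0 j + E 1 j) * hq B Mst (E 1 j / (E 0 j + E 1 j)) := by
    have h9 : ∀ j : Fin w, (E 0 j + E 1 j) * pev B Mst (E 1 j / (E 0 j + E 1 j)) =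
        ((baseA B Mst).1 * E 0 j + ((baseA B Mst).1 + (baseA B Mst).2) * E 1 j) +
          (E 0 j + E 1 j) * hq B Mst (E 1 j / (E 0 j + E 1 j)) := by
      intro j
      rw [pev_hinge Mst B hvB, mul_add, scale_aev _ _ _ (hEnn 0 j) (hEnn 1 j)]
    rw [Finset.sum_congr rfl fun j _ => h9 j, Finset.sum_add_distrib,
      Finset.sum_add_distrib, ← Finset.mul_sum, ← Finset.mul_sum, hE0, hE1]
    ring
  have hhc := hinge_comp (fun j => E 0 j) (fun j => E 1 j) (fun k => F 0 k) (fun k => F 1 k)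
    (fun j => hEnn 0 j) (fun j => hEnn 1 j) (fun k => hFnn 0 k) (fun k => hFnn 1 k)
    hpsi Mst B hvB
  have hchain : ∑ k, (F 0 k * lam 0 k + F 1 k * lam 1 k) ≤
      ∑ j, (lam 0 (cc j) * E 0 j + lam 1 (cc j) * E 1 j) := by
    have s1 : ∑ k, (F 0 k * lam 0 k + F 1 k * lam 1 k) ≤
        ∑ k, (F 0 k + F 1 k) * pev B Mst (F 1 k / (F 0 k + F 1 k)) :=
      Finset.sum_le_sum fun k _ => hsupF k
    have s2 : ∑ j, (E 0 j + E 1 j) * pev B Mst (E 1 j / (E 0 j + E 1 j)) =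
        ∑ j, (lam 0 (cc j) * E 0 j + lam 1 (cc j) * E 1 j) :=
      Finset.sum_congr rfl fun j _ => hsupE j
    rw [hdecF] at s1
    rw [hdecE] at s2
    linarith [hhc]
  have h1 := hfa (Φ Mstar) ⟨Mstar, hMstarS, rfl⟩
  rw [hfM] at h1
  rw [hfF] at hfx
  linarith

end PerBitAux
end F


/-- Per-bit code comparison: if the linear-program upper boundary of the equivalent transfer
matrix `E` dominates that of `F` on `[0,1]`, then `E` majorizes `F` (there is a row-stochastic
`M` with `E * M = F`), and consequently every randomized bit decoder for `F` is matched by one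
for `E` with at most the same error probability at each bit value. -/
theorem per_bit_code_comparison
    (w v : ℕ) (E : Matrix (Fin 2) (Fin w) ℝ) (F : Matrix (Fin 2) (Fin v) ℝ)
    (hE : RowStochastic E) (hF : RowStochastic F)
    (hdom : ∀ x ∈ Set.Icc (0 : ℝ) 1,
      sSup {s : ℝ | ∃ ε : Fin v → ℝ, (∀ j, ε j ∈ Set.Icc (0 : ℝ) 1) ∧
          (∑ j : Fin v, F 0 j * ε j) ≤ x ∧ s = ∑ j : Fin v, F 1 j * ε j} ≤
        sSup {s : ℝ | ∃ δ : Fin w → ℝ, (∀ j, δ j ∈ Set.Icc (0 : ℝ) 1) ∧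
          (∑ j : Fin w, E 0 j * δ j) ≤ x ∧ s = ∑ j : Fin w, E 1 j * δ j}) :
    (∃ M : Matrix (Fin w) (Fin v) ℝ, RowStochastic M ∧ E * M = F) ∧
      ∀ R : Matrix (Fin v) (Fin 2) ℝ, RowStochastic R →
        ∃ S : Matrix (Fin w) (Fin 2) ℝ, RowStochastic S ∧
          ∀ i : Fin 2,
            (∑ k : Fin w, E i k * S k (1 - i)) ≤ ∑ k : Fin v, F i k * R k (1 - i) := by
  have hpsi := PerBitAux.psi E F hE.1 hF.1 (hE.2 0) (hE.2 1) (hF.2 0) (hF.2 1) hdom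
  obtain ⟨M0, hM0nn, hM0row, hM0eq⟩ :=
    PerBitAux.exists_M E F hE.1 hF.1 (hE.2 0) (hE.2 1) (hF.2 0) (hF.2 1) hpsi
  set M : Matrix (Fin w) (Fin v) ℝ := Matrix.of M0 with hM
  have hMrs : RowStochastic M := ⟨hM0nn, hM0row⟩
  have hEM : E * M = F := by
    ext i k
    rw [Matrix.mul_apply]
    exact hM0eq i k
  refine ⟨⟨M, hMrs, hEM⟩, ?_⟩
  intro R hR
  refine ⟨M * R, ⟨?_, ?_⟩, ?_⟩
  · intro j l
    rw [Matrix.mul_apply]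
    exact Finset.sum_nonneg fun k _ => mul_nonneg (hM0nn j k) (hR.1 k l)
  · intro j
    simp only [Matrix.mul_apply]
    rw [Finset.sum_comm]
    have h9 : ∀ k, ∑ l, M j k * R k l = M j k := fun k => by
      rw [← Finset.mul_sum, hR.2 k, mul_one]
    rw [Finset.sum_congr rfl fun k _ => h9 k]
    exact hM0row j
  · intro i
    have hassoc : E * (M * R) = F * R := by rw [← Matrix.mul_assoc, hEM]
    have h2 := congrFun (congrFun hassoc i) (1 - i)
    rw [Matrix.mul_apply, Matrix.mul_apply] at h2
    exact le_of_eq h2
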